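/- Let T be a spherically symmetric infinite rooted tree, i.e., all vertices at distance k from the root have the same number of children, and let |Tₘ| denote the number of vertices at distance m from the root. Then simple random walk on T is transient if and only if Σ_m 1/|Tₘ| < ∞. -/

import Mathlib

open Finset

/-! A spherically symmetric infinite rooted tree is determined by the sequence
`a : ℕ → ℕ`, where every vertex at distance `k` from the root has `a k`
children (so each level is nonempty when `∀ k, 1 ≤ a k`).  The number of
vertices at level `m` is `|T_m| = ∏_{k < m} a k`.

Simple random walk on such a tree projects to the Markov chain of the distance
from the root: from level `0` it moves to level `1` with probability `1`, and
from level `k ≥ 1` it moves up to level `k+1` with probability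
`a k / (a k + 1)` and down to level `k-1` with probability `1 / (a k + 1)`
(a vertex at level `k ≥ 1` has degree `a k + 1`).  All quantities relevant to
transience depend only on this level chain. -/

/-- Probability that simple random walk at a vertex of level `k` steps away
from the root. -/
noncomputable def upProb (a : ℕ → ℕ) : ℕ → ℝ
  | 0 => 1
  | (k+1) => (a (k+1) : ℝ) / ((a (k+1) : ℝ) + 1)

/-- Probability that simple random walk at a vertex of level `k` steps toward
the root. -/
noncomputable def downProb (a : ℕ → ℕ) : ℕ → ℝ
  | 0 => 0
  | (k+1) => 1 / ((a (k+1) : ℝ) + 1)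

/-- `levelDist a n j` is the probability that the simple random walk on the
spherically symmetric tree with child counts `a`, started at the root, is at
level `j` at time `n`. -/
noncomputable def levelDist (a : ℕ → ℕ) : ℕ → ℕ → ℝ
  | 0, j => if j = 0 then 1 else 0
  | (n+1), j =>
      (if j = 0 then 0 else levelDist a n (j-1) * upProb a (j-1)) +
        levelDist a n (j+1) * downProb a (j+1)

/-! ### Auxiliary development -/

/-- The resistance of the edge from level `m` to level `m+1` (up to a constant). -/
noncomputable def resist (a : ℕ → ℕ) (m : ℕ) : ℝ :=
  ∏ k ∈ Finset.range m, ((a (k+1) : ℝ))⁻¹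

namespace SSTaux

variable (a : ℕ → ℕ)

lemma apos (ha : ∀ k, 1 ≤ a k) (k : ℕ) : (0:ℝ) < a k := by
  have := ha k; positivity

lemma up_nonneg (j : ℕ) : 0 ≤ upProb a j := by
  cases j with
  | zero => norm_num [upProb]
  | succ k => unfold upProb; positivity

lemma up_pos (ha : ∀ k, 1 ≤ a k) (j : ℕ) : 0 < upProb a j := by
  cases j with
  | zero => norm_num [upProb]
  | succ k =>
    unfold upProb
    have := apos a ha (k+1)
    positivity

lemma down_nonneg (j : ℕ) : 0 ≤ downProb a j := by
  cases j with
  | zero => norm_num [downProb]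
  | succ k => unfold downProb; positivity

lemma down_pos (j : ℕ) : 0 < downProb a (j+1) := by
  unfold downProb; positivity

lemma ud_one (j : ℕ) : upProb a j + downProb a j = 1 := by
  cases j with
  | zero => norm_num [upProb, downProb]
  | succ k =>
    unfold upProb downProb
    have : ((a (k+1) : ℝ) + 1) ≠ 0 := by positivity
    field_simp

lemma resist_pos (ha : ∀ k, 1 ≤ a k) (m : ℕ) : 0 < resist a m := by
  unfold resist
  apply Finset.prod_pos
  intro k _
  have := apos a ha (k+1); positivity

lemma resist_zero : resist a 0 = 1 := by simp [resist]

/-- Key resistance identity: `d_{j+1} r_j = u_{j+1} r_{j+1}`. -/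
lemma key (ha : ∀ k, 1 ≤ a k) (j : ℕ) :
    downProb a (j+1) * resist a j = upProb a (j+1) * resist a (j+1) := by
  have h1 : resist a (j+1) = resist a j * ((a (j+1) : ℝ))⁻¹ := by
    unfold resist; rw [Finset.prod_range_succ]
  have ha1 : (0:ℝ) < a (j+1) := apos a ha (j+1)
  have ha2 : ((a (j+1) : ℝ) + 1) ≠ 0 := by positivity
  rw [h1]
  unfold upProb downProb
  field_simp

lemma ld_zero_zero : levelDist a 0 0 = 1 := by simp [levelDist]

lemma ld_zero_succ (j : ℕ) : levelDist a 0 (j+1) = 0 := by simp [levelDist]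

lemma ld_succ_zero (n : ℕ) :
    levelDist a (n+1) 0 = levelDist a n 1 * downProb a 1 := by
  simp [levelDist]

lemma ld_succ_succ (n j : ℕ) : levelDist a (n+1) (j+1) =
    levelDist a n j * upProb a j + levelDist a n (j+2) * downProb a (j+2) := by
  simp [levelDist]

lemma ld_nonneg : ∀ n j, 0 ≤ levelDist a n j := by
  intro n
  induction n with
  | zero => intro j; by_cases h : j = 0 <;> simp [levelDist, h]
  | succ n ih =>
    intro j
    cases j with
    | zero =>
      rw [ld_succ_zero]
      exact mul_nonneg (ih 1) (down_nonneg a 1)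
    | succ k =>
      rw [ld_succ_succ]
      exact add_nonneg (mul_nonneg (ih k) (up_nonneg a k))
        (mul_nonneg (ih (k+2)) (down_nonneg a (k+2)))

lemma ld_eq_zero : ∀ n j, n < j → levelDist a n j = 0 := by
  intro n
  induction n with
  | zero =>
    intro j hj
    have : j ≠ 0 := by omega
    simp [levelDist, this]
  | succ n ih =>
    intro j hj
    match j, hj with
    | (k+1), hj =>
      rw [ld_succ_succ]
      rw [ih k (by omega), ih (k+2) (by omega)]
      ring

/-! ### Truncated Green's function -/

/-- Truncated Green's function: expected number of visits to level `j` before time `N`. -/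
noncomputable def S (N j : ℕ) : ℝ := ∑ n ∈ Finset.range N, levelDist a n j

lemma S_nonneg (N j : ℕ) : 0 ≤ S a N j :=
  Finset.sum_nonneg fun n _ => ld_nonneg a n j

lemma S_mono (N j : ℕ) : S a N j ≤ S a (N+1) j := by
  unfold S
  rw [Finset.sum_range_succ]
  have := ld_nonneg a N j
  linarith

lemma S_succ_zero (N : ℕ) : S a (N+1) 0 = 1 + S a N 1 * downProb a 1 := by
  unfold S
  rw [Finset.sum_range_succ']
  simp only [ld_succ_zero, ld_zero_zero]
  rw [← Finset.sum_mul]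
  ring

lemma S_succ_succ (N j : ℕ) :
    S a (N+1) (j+1) = S a N j * upProb a j + S a N (j+2) * downProb a (j+2) := by
  unfold S
  rw [Finset.sum_range_succ']
  simp only [ld_succ_succ, ld_zero_succ]
  rw [Finset.sum_add_distrib, ← Finset.sum_mul, ← Finset.sum_mul]
  ring

/-- Truncated unit-flow inequality: `S_N(j) u_j ≤ 1 + S_N(j+1) d_{j+1}`. -/
lemma main_ineq (ha : ∀ k, 1 ≤ a k) :
    ∀ j N, S a N j * upProb a j ≤ 1 + S a N (j+1) * downProb a (j+1) := by
  intro j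
  induction j with
  | zero =>
    intro N
    cases N with
    | zero =>
      have h1 := S_nonneg a 0 1
      have h2 := down_nonneg a 1
      simp only [S, Finset.range_zero, Finset.sum_empty, zero_mul]
      nlinarith
    | succ N =>
      rw [S_succ_zero]
      have h1 : upProb a 0 = 1 := by norm_num [upProb]
      rw [h1, mul_one]
      have h2 := S_mono a N 1
      have h3 := down_nonneg a 1
      nlinarith
  | succ j ih =>
    intro N
    cases N with
    | zero =>
      have h1 := S_nonneg a 0 (j+2)
      have h2 := down_nonneg a (j+2)
      simp only [S, Finset.range_zero, Finset.sum_empty, zero_mul]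
      nlinarith
    | succ N =>
      have hrec := S_succ_succ a N j
      have hud := ud_one a (j+1)
      have hu : upProb a (j+1) = 1 - downProb a (j+1) := by linarith
      rw [hu, mul_sub, mul_one]
      have hmono1 := S_mono a N (j+1)
      have hmono2 := S_mono a N (j+2)
      have hd1 := down_nonneg a (j+1)
      have hd2 := down_nonneg a (j+2)
      have hAB : S a N (j+1) * downProb a (j+1) ≤ S a (N+1) (j+1) * downProb a (j+1) :=
        mul_le_mul_of_nonneg_right hmono1 hd1
      have hCD : S a N (j+2) * downProb a (j+2) ≤ S a (N+1) (j+2) * downProb a (j+2) :=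
        mul_le_mul_of_nonneg_right hmono2 hd2
      have := ih N
      linarith

/-- Telescoped truncated inequality. -/
lemma tele (ha : ∀ k, 1 ≤ a k) (N : ℕ) : ∀ M,
    S a N 0 ≤ (∑ j ∈ Finset.range M, resist a j) + S a N M * (resist a M * upProb a M) := by
  intro M
  induction M with
  | zero =>
    have : resist a 0 * upProb a 0 = 1 := by norm_num [resist, upProb]
    rw [this]
    simp
  | succ M ihM =>
    have h1 := main_ineq a ha M N
    have h2 : S a N M * upProb a M * resist a M
        ≤ (1 + S a N (M+1) * downProb a (M+1)) * resist a M :=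
      mul_le_mul_of_nonneg_right h1 (resist_pos a ha M).le
    have h3 : (1 + S a N (M+1) * downProb a (M+1)) * resist a M
        = resist a M + S a N (M+1) * (resist a (M+1) * upProb a (M+1)) := by
      linear_combination (S a N (M+1)) * key a ha M
    rw [Finset.sum_range_succ]
    nlinarith [ihM]

/-- The truncated Green's function at the root is bounded by the total resistance. -/
lemma S_le_sum_resist (ha : ∀ k, 1 ≤ a k) (N : ℕ) :
    S a N 0 ≤ ∑ j ∈ Finset.range N, resist a j := by
  have h := tele a ha N N
  have hSN : S a N N = 0 := by
    unfold S
    apply Finset.sum_eq_zero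
    intro n hn
    exact ld_eq_zero a n N (Finset.mem_range.mp hn)
  rw [hSN] at h
  simpa using h

/-! ### The transient case: exact flow identities for the full Green's function -/

lemma forward_struct (ha : ∀ k, 1 ≤ a k) (h0 : Summable (fun n => levelDist a n 0)) :
    ∀ j, Summable (fun n => levelDist a n j) ∧ Summable (fun n => levelDist a n (j+1)) ∧
      (∑' n, levelDist a n j) * upProb a j
        = 1 + (∑' n, levelDist a n (j+1)) * downProb a (j+1) := by
  intro j
  induction j with
  | zero =>
    have hd1 : (downProb a 1) ≠ 0 := (down_pos a 0).ne'
    have e : ∀ n, levelDist a n 1 = levelDist a (n+1) 0 * (downProb a 1)⁻¹ := by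
      intro n
      rw [ld_succ_zero]
      field_simp
    have h1 : Summable (fun n => levelDist a n 1) := by
      have := ((summable_nat_add_iff 1).2 h0).mul_right (downProb a 1)⁻¹
      exact this.congr fun n => (e n).symm
    refine ⟨h0, h1, ?_⟩
    have hts : (∑' n, levelDist a n 0)
        = levelDist a 0 0 + ∑' n, levelDist a (n+1) 0 := h0.tsum_eq_zero_add
    have hts2 : (∑' n, levelDist a (n+1) 0) = (∑' n, levelDist a n 1) * downProb a 1 := by
      rw [← tsum_mul_right]
      exact tsum_congr fun n => ld_succ_zero a n
    have hu0 : upProb a 0 = 1 := by norm_num [upProb]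
    rw [hu0, mul_one, hts, hts2, ld_zero_zero]
  | succ j ihj =>
    obtain ⟨h1, h2, hid⟩ := ihj
    have hd2 : (downProb a (j+2)) ≠ 0 := (down_pos a (j+1)).ne'
    have e : ∀ n, levelDist a n (j+2)
        = (levelDist a (n+1) (j+1) - levelDist a n j * upProb a j) * (downProb a (j+2))⁻¹ := by
      intro n
      rw [ld_succ_succ]
      field_simp
      ring
    have h3 : Summable (fun n => levelDist a n (j+2)) := by
      have := (((summable_nat_add_iff 1).2 h2).sub (h1.mul_right (upProb a j))).mul_right
        (downProb a (j+2))⁻¹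
      exact this.congr fun n => (e n).symm
    refine ⟨h2, h3, ?_⟩
    have heq : (∑' n, levelDist a n (j+1))
        = (∑' n, levelDist a n j) * upProb a j
          + (∑' n, levelDist a n (j+2)) * downProb a (j+2) := by
      rw [h2.tsum_eq_zero_add, ld_zero_succ]
      have : (∑' n, levelDist a (n+1) (j+1))
          = ∑' n, (levelDist a n j * upProb a j + levelDist a n (j+2) * downProb a (j+2)) :=
        tsum_congr fun n => ld_succ_succ a n j
      rw [this, (h1.mul_right _).tsum_add (h3.mul_right _), tsum_mul_right, tsum_mul_right]
      ring
    have hud := ud_one a (j+1)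
    linear_combination hid + heq + (∑' n, levelDist a n (j+1)) * hud

lemma sum_resist_le (ha : ∀ k, 1 ≤ a k) (h0 : Summable (fun n => levelDist a n 0)) (M : ℕ) :
    ∑ j ∈ Finset.range M, resist a j ≤ ∑' n, levelDist a n 0 := by
  have key2 : ∀ M, (∑' n, levelDist a n 0)
      = (∑ j ∈ Finset.range M, resist a j)
        + (∑' n, levelDist a n M) * (resist a M * upProb a M) := by
    intro M
    induction M with
    | zero =>
      have : resist a 0 * upProb a 0 = 1 := by norm_num [resist, upProb]
      rw [this]
      simp
    | succ M ihM =>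
      obtain ⟨_, _, hid⟩ := forward_struct a ha h0 M
      have step : (∑' n, levelDist a n M) * (resist a M * upProb a M)
          = resist a M + (∑' n, levelDist a n (M+1)) * (resist a (M+1) * upProb a (M+1)) := by
        linear_combination (resist a M) * hid + (∑' n, levelDist a n (M+1)) * key a ha M
      rw [Finset.sum_range_succ]
      rw [ihM, step]
      ring
  have h := key2 M
  have hG : 0 ≤ (∑' n, levelDist a n M) := tsum_nonneg fun n => ld_nonneg a n M
  have hv : 0 ≤ resist a M * upProb a M :=
    mul_nonneg (resist_pos a ha M).le (up_nonneg a M)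
  nlinarith

/-! ### Translation between `resist` and `1/|T_m|` -/

lemma summable_resist_iff (ha : ∀ k, 1 ≤ a k) :
    Summable (fun m => 1 / (∏ k ∈ Finset.range m, (a k : ℝ))) ↔ Summable (resist a) := by
  have ha0 : ((a 0 : ℝ)) ≠ 0 := (apos a ha 0).ne'
  have e : ∀ m, (1:ℝ) / (∏ k ∈ Finset.range (m+1), (a k : ℝ))
      = (a 0 : ℝ)⁻¹ * resist a m := by
    intro m
    rw [Finset.prod_range_succ']
    rw [one_div, mul_inv]
    unfold resist
    rw [← Finset.prod_inv_distrib]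
    ring
  rw [← summable_nat_add_iff 1]
  have : (fun m => 1 / (∏ k ∈ Finset.range (m+1), (a k : ℝ)))
      = fun m => (a 0 : ℝ)⁻¹ * resist a m := funext e
  rw [this]
  exact summable_mul_left_iff (inv_ne_zero ha0)

end SSTaux

/-- **Transience criterion for spherically symmetric trees.**  Simple random
walk on the spherically symmetric tree with child counts `a` is transient
(i.e., the expected number of visits to the root, `∑ₙ P[walk is at the root at
time n]`, is finite) if and only if `∑ₘ 1/|T_m| < ∞`, where
`|T_m| = ∏_{k<m} a k` is the size of level `m`. -/
theorem sphericallySymmetric_transient_iff (a : ℕ → ℕ) (ha : ∀ k, 1 ≤ a k) :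
    Summable (fun n => levelDist a n 0) ↔
      Summable (fun m => 1 / (∏ k ∈ Finset.range m, (a k : ℝ))) := by
  rw [SSTaux.summable_resist_iff a ha]
  constructor
  · intro h0
    exact summable_of_sum_range_le (fun m => (SSTaux.resist_pos a ha m).le)
      (fun M => SSTaux.sum_resist_le a ha h0 M)
  · intro hr
    apply summable_of_sum_range_le (fun n => SSTaux.ld_nonneg a n 0)
    intro N
    calc ∑ n ∈ Finset.range N, levelDist a n 0
        ≤ ∑ j ∈ Finset.range N, resist a j := SSTaux.S_le_sum_resist a ha N
      _ ≤ ∑' j, resist a j :=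
          hr.sum_le_tsum _ (fun j _ => (SSTaux.resist_pos a ha j).le)
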